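/- If a syntactic protocol P is symmetric, then its extension is symmetric: for every permutation J of the agents and every initial gossip graph G, the extension Q of P satisfies Q(J(G)) = J(Q(G)), where J(G) relabels the agents of G by J and J(Q(G)) = { J(σ) : σ ∈ Q(G) } with J applied callwise to call sequences. -/

import Mathlib

set_option maxHeartbeats 1000000

structure GossipGraph (A : Type) : Type where
  N : A → A → Prop
  S : A → A → Prop
  refl_S : ∀ a, S a a
  S_sub_N : ∀ a b, S a b → N a b

namespace Gossip

variable {A : Type}

def Initial (G : GossipGraph A) : Prop := ∀ a b, G.S a b ↔ a = b

def doCall (G : GossipGraph A) (c : A × A) : GossipGraph A where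
  N x y := G.N x y ∨ ((x = c.1 ∨ x = c.2) ∧ (G.N c.1 y ∨ G.N c.2 y))
  S x y := G.S x y ∨ ((x = c.1 ∨ x = c.2) ∧ (G.S c.1 y ∨ G.S c.2 y))
  refl_S a := Or.inl (G.refl_S a)
  S_sub_N a b h := by
    rcases h with h | ⟨h1, h2 | h2⟩
    · exact Or.inl (G.S_sub_N a b h)
    · exact Or.inr ⟨h1, Or.inl (G.S_sub_N _ _ h2)⟩
    · exact Or.inr ⟨h1, Or.inr (G.S_sub_N _ _ h2)⟩

def doCalls (G : GossipGraph A) (σ : List (A × A)) : GossipGraph A :=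
  σ.foldl doCall G

def PossibleSeq (G : GossipGraph A) : List (A × A) → Prop
  | [] => True
  | c :: σ => c.1 ≠ c.2 ∧ G.N c.1 c.2 ∧ PossibleSeq (doCall G c) σ

mutual
  inductive Form (A : Type) : Type where
    | top : Form A
    | atomN : A → A → Form A
    | atomS : A → A → Form A
    | neg : Form A → Form A
    | conj : Form A → Form A → Form A
    | K : A → (A → A → Form A) → Form A → Form A
    | box : Prog A → Form A → Form A
  inductive Prog (A : Type) : Type where
    | test : Form A → Prog A
    | call : A → A → Prog A
    | seq : Prog A → Prog A → Prog A
    | cup : Prog A → Prog A → Prog A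
    | star : Prog A → Prog A
end

abbrev Protocol (A : Type) := A → A → Form A

inductive Epi (G : GossipGraph A) (perm : List (A × A) → (A × A) → Prop) (a : A) :
    List (A × A) → List (A × A) → Prop where
  | refl : Epi G perm a [] []
  | call_out {σ τ : List (A × A)} {b : A} :
      Epi G perm a σ τ →
      (∀ x, (doCalls G σ).N b x ↔ (doCalls G τ).N b x) →
      (∀ x, (doCalls G σ).S b x ↔ (doCalls G τ).S b x) →
      perm σ (a, b) → perm τ (a, b) →
      Epi G perm a (σ ++ [(a, b)]) (τ ++ [(a, b)])
  | call_in {σ τ : List (A × A)} {b : A} :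
      Epi G perm a σ τ →
      (∀ x, (doCalls G σ).N b x ↔ (doCalls G τ).N b x) →
      (∀ x, (doCalls G σ).S b x ↔ (doCalls G τ).S b x) →
      perm σ (b, a) → perm τ (b, a) →
      Epi G perm a (σ ++ [(b, a)]) (τ ++ [(b, a)])
  | other {σ τ : List (A × A)} {c d e f : A} :
      Epi G perm a σ τ →
      c ≠ a → d ≠ a → e ≠ a → f ≠ a →
      perm σ (c, d) → perm τ (e, f) →
      Epi G perm a (σ ++ [(c, d)]) (τ ++ [(e, f)])

mutual
  def Sat (G : GossipGraph A) : List (A × A) → Form A → Prop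
    | _, Form.top => True
    | σ, Form.atomN a b => (doCalls G σ).N a b
    | σ, Form.atomS a b => (doCalls G σ).S a b
    | σ, Form.neg φ => ¬ Sat G σ φ
    | σ, Form.conj φ ψ => Sat G σ φ ∧ Sat G σ ψ
    | σ, Form.K a P φ =>
        ∀ τ, Epi G (fun ρ c => c.1 ≠ c.2 ∧ (doCalls G ρ).N c.1 c.2 ∧ Sat G ρ (P c.1 c.2)) a τ σ →
          Sat G τ φ
    | σ, Form.box π φ => ∀ τ, ProgRel G π σ τ → Sat G τ φ
  def ProgRel (G : GossipGraph A) : Prog A → List (A × A) → List (A × A) → Prop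
    | Prog.test φ, σ, τ => σ = τ ∧ Sat G σ φ
    | Prog.call a b, σ, τ => a ≠ b ∧ (doCalls G σ).N a b ∧ τ = σ ++ [(a, b)]
    | Prog.seq π π', σ, τ => ∃ ρ, ProgRel G π σ ρ ∧ ProgRel G π' ρ τ
    | Prog.cup π π', σ, τ => ProgRel G π σ τ ∨ ProgRel G π' σ τ
    | Prog.star π, σ, τ => Relation.ReflTransGen (fun x y => ProgRel G π x y) σ τ
end


/-- A call `ab` is `P`-permitted at `(G, σ)` iff `a ≠ b`, `N^σ a b` and `G,σ ⊨ P_{ab}`. -/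
def Permits (G : GossipGraph A) (P : Protocol A) (σ : List (A × A)) (c : A × A) : Prop :=
  c.1 ≠ c.2 ∧ (doCalls G σ).N c.1 c.2 ∧ Sat G σ (P c.1 c.2)

/-- The least set of call sequences containing `ε` and closed under adding permitted calls. -/
inductive Ext (G : GossipGraph A) (perm : List (A × A) → (A × A) → Prop) : List (A × A) → Prop where
  | nil : Ext G perm []
  | snoc {σ : List (A × A)} {c : A × A} : Ext G perm σ → perm σ c → Ext G perm (σ ++ [c])

/-- The extension of a syntactic protocol `P` on an (initial) gossip graph `G`. -/
def extension (P : Protocol A) (G : GossipGraph A) : Set (List (A × A)) :=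
  { σ | Ext G (Permits G P) σ }

/-- A formula is valid iff it is true at every gossip state, i.e. at every pair of an
initial gossip graph and a call sequence possible on it. -/
def Valid (φ : Form A) : Prop :=
  ∀ G : GossipGraph A, Initial G → ∀ σ : List (A × A), PossibleSeq G σ → Sat G σ φ

def impF (φ ψ : Form A) : Form A := Form.neg (Form.conj φ (Form.neg ψ))
def orF (φ ψ : Form A) : Form A := Form.neg (Form.conj (Form.neg φ) (Form.neg ψ))
def iffF (φ ψ : Form A) : Form A := Form.conj (impF φ ψ) (impF ψ φ)
/-- The epistemic "possibility" dual `K̂ := ¬K¬`. -/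
def hatK (a : A) (P : Protocol A) (φ : Form A) : Form A := Form.neg (Form.K a P (Form.neg φ))

/-- A semantic protocol, as raw data: a map from (initial) gossip graphs to sets of call
sequences. -/
abbrev RawSem (A : Type) := GossipGraph A → Set (List (A × A))

/-- For a semantic protocol, a call `c` is permitted at `(G,σ)` iff `σ;c ∈ P(G)`. -/
def semPerm (Q : RawSem A) (G : GossipGraph A) (σ : List (A × A)) (c : A × A) : Prop :=
  σ ++ [c] ∈ Q G

/-- `σ` is terminal (in `Q(G)`) iff no further call is permitted. -/
def TerminalIn (Q : RawSem A) (G : GossipGraph A) (σ : List (A × A)) : Prop :=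
  ∀ c : A × A, σ ++ [c] ∉ Q G

/-- All agents are experts: everyone knows all secrets. -/
def AllExpert (G : GossipGraph A) : Prop := ∀ a b : A, G.S a b

/-- A semantic protocol: assigns to each initial gossip graph a set of call sequences
possible on it, containing the empty sequence and closed under prefixes. -/
structure SemProtocol (A : Type) : Type where
  ext : GossipGraph A → Set (List (A × A))
  nil_mem : ∀ G : GossipGraph A, Initial G → [] ∈ ext G
  prefix_closed : ∀ G : GossipGraph A, Initial G → ∀ σ c, σ ++ [c] ∈ ext G → σ ∈ ext G
  possible : ∀ G : GossipGraph A, Initial G → ∀ σ ∈ ext G, PossibleSeq G σ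

/-- A semantic protocol is epistemic iff a call `ab` is permitted at `(G,σ)` exactly when it
is permitted at all states that agent `a` cannot distinguish from `(G,σ)`. -/
def SemEpistemic (Q : RawSem A) : Prop :=
  ∀ G : GossipGraph A, Initial G → ∀ σ ∈ Q G, ∀ a b : A, a ≠ b →
    (σ ++ [(a, b)] ∈ Q G ↔ ∀ τ, Epi G (semPerm Q G) a τ σ → τ ++ [(a, b)] ∈ Q G)

/-- Relabelling the agents of a gossip graph along a permutation. -/
def mapGraph (J : Equiv.Perm A) (G : GossipGraph A) : GossipGraph A where
  N x y := G.N (J.symm x) (J.symm y)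
  S x y := G.S (J.symm x) (J.symm y)
  refl_S a := G.refl_S _
  S_sub_N a b h := G.S_sub_N _ _ h

/-- Relabelling a call sequence, callwise. -/
def mapSeq (J : Equiv.Perm A) (σ : List (A × A)) : List (A × A) :=
  σ.map (fun c => (J c.1, J c.2))

mutual
  /-- Relabelling the agents in a formula along a permutation. -/
  def mapForm (J : Equiv.Perm A) : Form A → Form A
    | Form.top => Form.top
    | Form.atomN a b => Form.atomN (J a) (J b)
    | Form.atomS a b => Form.atomS (J a) (J b)
    | Form.neg φ => Form.neg (mapForm J φ)
    | Form.conj φ ψ => Form.conj (mapForm J φ) (mapForm J ψ)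
    | Form.K a P φ => Form.K (J a) (fun x y => mapForm J (P (J.symm x) (J.symm y))) (mapForm J φ)
    | Form.box π φ => Form.box (mapProg J π) (mapForm J φ)
  /-- Relabelling the agents in a program along a permutation. -/
  def mapProg (J : Equiv.Perm A) : Prog A → Prog A
    | Prog.test φ => Prog.test (mapForm J φ)
    | Prog.call a b => Prog.call (J a) (J b)
    | Prog.seq π π' => Prog.seq (mapProg J π) (mapProg J π')
    | Prog.cup π π' => Prog.cup (mapProg J π) (mapProg J π')
    | Prog.star π => Prog.star (mapProg J π)
end

/-- A semantic protocol is symmetric iff it commutes with relabelling of the agents. -/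
def SemSymmetric (Q : RawSem A) : Prop :=
  ∀ (J : Equiv.Perm A) (G : GossipGraph A), Initial G →
    Q (mapGraph J G) = mapSeq J '' Q G

def listConj (l : List (Form A)) : Form A := l.foldr Form.conj Form.top
def listDisj (l : List (Form A)) : Form A := l.foldr orF (Form.neg Form.top)

noncomputable def pairsList (A : Type) [Fintype A] : List (A × A) := (Finset.univ : Finset (A × A)).toList
noncomputable def distinctPairs (A : Type) [Fintype A] [DecidableEq A] : List (A × A) :=
  (pairsList A).filter (fun c => decide (c.1 ≠ c.2))

/-- The formula `Ex`: all agents are experts. -/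
noncomputable def ExForm (A : Type) [Fintype A] : Form A :=
  listConj ((pairsList A).map (fun c => Form.atomS c.1 c.2))

/-- `Ex ∨ ⋁_{i≠j} (N_ij ∧ P_ij)`. -/
noncomputable def oneStepBody (A : Type) [Fintype A] [DecidableEq A] (P : Protocol A) : Form A :=
  orF (ExForm A) (listDisj ((distinctPairs A).map (fun c => Form.conj (Form.atomN c.1 c.2) (P c.1 c.2))))

/-- Hard one-step strengthening: `P_ab ∧ K_a^P [ab](Ex ∨ ⋁_{i≠j}(N_ij ∧ P_ij))`. -/
noncomputable def hardOneStep {A : Type} [Fintype A] [DecidableEq A] (P : Protocol A) : Protocol A :=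
  fun a b => Form.conj (P a b) (Form.K a P (Form.box (Prog.call a b) (oneStepBody A P)))

/-- Soft one-step strengthening: `P_ab ∧ K̂_a^P [ab](Ex ∨ ⋁_{i≠j}(N_ij ∧ P_ij))`. -/
noncomputable def softOneStep {A : Type} [Fintype A] [DecidableEq A] (P : Protocol A) : Protocol A :=
  fun a b => Form.conj (P a b) (hatK a P (Form.box (Prog.call a b) (oneStepBody A P)))

/-- The protocol `P` as a program:
`(⋃_{a≠b} ?(N_ab ∧ P_ab);ab)* ; ?⋀_{a≠b} ¬(N_ab ∧ P_ab)`. -/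
noncomputable def protProg (A : Type) [Fintype A] [DecidableEq A] (P : Protocol A) : Prog A :=
  Prog.seq
    (Prog.star (((distinctPairs A).map (fun c =>
      Prog.seq (Prog.test (Form.conj (Form.atomN c.1 c.2) (P c.1 c.2))) (Prog.call c.1 c.2))).foldr
        Prog.cup (Prog.test (Form.neg Form.top))))
    (Prog.test (listConj ((distinctPairs A).map (fun c =>
      Form.neg (Form.conj (Form.atomN c.1 c.2) (P c.1 c.2))))))

/-- Hard look-ahead strengthening: `P_ab ∧ K_a^P [ab]⟨P⟩Ex`. -/
noncomputable def hardLookAhead {A : Type} [Fintype A] [DecidableEq A] (P : Protocol A) : Protocol A :=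
  fun a b => Form.conj (P a b)
    (Form.K a P (Form.box (Prog.call a b)
      (Form.neg (Form.box (protProg A P) (Form.neg (ExForm A))))))

/-- Soft look-ahead strengthening: `P_ab ∧ K̂_a^P [ab]⟨P⟩Ex`. -/
noncomputable def softLookAhead {A : Type} [Fintype A] [DecidableEq A] (P : Protocol A) : Protocol A :=
  fun a b => Form.conj (P a b)
    (hatK a P (Form.box (Prog.call a b)
      (Form.neg (Form.box (protProg A P) (Form.neg (ExForm A))))))

/-- Hard uniform backward defoliation of a semantic protocol. -/
def HUBD (Q : RawSem A) : RawSem A := fun G =>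
  { σ | σ ∈ Q G ∧ (σ = [] ∨ ∃ τ : List (A × A), ∃ a b : A, σ = τ ++ [(a, b)] ∧
      ∀ τ', Epi G (semPerm Q G) a τ' τ →
        (τ' ++ [(a, b)] ∈ Q G ∧ TerminalIn Q G (τ' ++ [(a, b)])) →
          AllExpert (doCalls G (τ' ++ [(a, b)]))) }

/-- Soft uniform backward defoliation of a semantic protocol. -/
def SUBD (Q : RawSem A) : RawSem A := fun G =>
  { σ | σ ∈ Q G ∧ (σ = [] ∨ ∃ τ : List (A × A), ∃ a b : A, σ = τ ++ [(a, b)] ∧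
      ∃ τ', Epi G (semPerm Q G) a τ' τ ∧
        ((τ' ++ [(a, b)] ∈ Q G ∧ TerminalIn Q G (τ' ++ [(a, b)])) →
          AllExpert (doCalls G (τ' ++ [(a, b)])))) }

/-- The syntactic protocol LNS: `LNS_ab := ¬ S_ab`. -/
def LNSsyn (A : Type) : Protocol A := fun a b => Form.neg (Form.atomS a b)

/-- LNS-permitted: call `ab` permitted at `(G,σ)` iff `N^σ a b` and not `S^σ a b`. -/
def LNSperm (G : GossipGraph A) (σ : List (A × A)) (c : A × A) : Prop :=
  c.1 ≠ c.2 ∧ (doCalls G σ).N c.1 c.2 ∧ ¬ (doCalls G σ).S c.1 c.2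

/-- LNS as a semantic protocol. -/
def LNSsem : RawSem A := fun G => { σ | Ext G (LNSperm G) σ }

/-- A semantic protocol is strongly successful on `G` iff every terminal sequence makes
all agents experts. -/
def StronglySuccessfulOn (Q : RawSem A) (G : GossipGraph A) : Prop :=
  ∀ σ ∈ Q G, TerminalIn Q G σ → AllExpert (doCalls G σ)

/-- A semantic protocol is weakly successful on `G` iff some terminal sequence makes
all agents experts. -/
def WeaklySuccessfulOn (Q : RawSem A) (G : GossipGraph A) : Prop :=
  ∃ σ ∈ Q G, TerminalIn Q G σ ∧ AllExpert (doCalls G σ)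


/- ================= auxiliary lemmas ================= -/

theorem graph_ext' {G H : GossipGraph A} (hN : ∀ a b, G.N a b ↔ H.N a b)
    (hS : ∀ a b, G.S a b ↔ H.S a b) : G = H := by
  obtain ⟨GN, GS, _, _⟩ := G
  obtain ⟨HN, HS, _, _⟩ := H
  have h1 : GN = HN := funext fun a => funext fun b => propext (hN a b)
  subst h1
  have h2 : GS = HS := funext fun a => funext fun b => propext (hS a b)
  subst h2
  rfl

theorem mapSeq_append (J : Equiv.Perm A) (σ : List (A × A)) (c : A × A) :
    mapSeq J (σ ++ [c]) = mapSeq J σ ++ [(J c.1, J c.2)] := by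
  simp [mapSeq]

theorem mapSeq_cons (J : Equiv.Perm A) (σ : List (A × A)) (c : A × A) :
    mapSeq J (c :: σ) = (J c.1, J c.2) :: mapSeq J σ := rfl

theorem mapSeq_symm_map (J : Equiv.Perm A) (σ : List (A × A)) :
    mapSeq J.symm (mapSeq J σ) = σ := by
  simp [mapSeq, List.map_map, Function.comp_def]

theorem mapSeq_map_symm (J : Equiv.Perm A) (σ : List (A × A)) :
    mapSeq J (mapSeq J.symm σ) = σ := by
  simp [mapSeq, List.map_map, Function.comp_def]

theorem mapSeq_inj (J : Equiv.Perm A) {σ τ : List (A × A)} (h : mapSeq J σ = mapSeq J τ) :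
    σ = τ := by
  have := congrArg (mapSeq J.symm) h
  rwa [mapSeq_symm_map, mapSeq_symm_map] at this

theorem doCall_map (J : Equiv.Perm A) (G : GossipGraph A) (c : A × A) :
    doCall (mapGraph J G) (J c.1, J c.2) = mapGraph J (doCall G c) := by
  apply graph_ext' <;> intro a b <;>
    simp [doCall, mapGraph, Equiv.symm_apply_eq]

theorem doCalls_map (J : Equiv.Perm A) (G : GossipGraph A) (σ : List (A × A)) :
    doCalls (mapGraph J G) (mapSeq J σ) = mapGraph J (doCalls G σ) := by
  induction σ generalizing G with
  | nil => rfl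
  | cons c σ ih =>
      show doCalls (doCall (mapGraph J G) (J c.1, J c.2)) (mapSeq J σ) = _
      rw [doCall_map]
      exact ih (doCall G c)

theorem mapGraph_symm_map (J : Equiv.Perm A) (G : GossipGraph A) :
    mapGraph J.symm (mapGraph J G) = G := by
  apply graph_ext' <;> intro a b <;> simp [mapGraph]

theorem epi_map_fwd (J : Equiv.Perm A) (G : GossipGraph A)
    {perm perm' : List (A × A) → (A × A) → Prop}
    (hp : ∀ ρ c, perm ρ c → perm' (mapSeq J ρ) (J c.1, J c.2)) (a : A)
    {σ τ : List (A × A)} (h : Epi G perm a σ τ) :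
    Epi (mapGraph J G) perm' (J a) (mapSeq J σ) (mapSeq J τ) := by
  induction h with
  | refl => exact Epi.refl
  | @call_out σ τ b h hN hS h1 h2 ih =>
      rw [mapSeq_append, mapSeq_append]
      refine Epi.call_out ih (fun x => ?_) (fun x => ?_) (hp _ _ h1) (hp _ _ h2) <;>
        · rw [doCalls_map, doCalls_map]
          simpa [mapGraph] using (by first | exact hN (J.symm x) | exact hS (J.symm x))
  | @call_in σ τ b h hN hS h1 h2 ih =>
      rw [mapSeq_append, mapSeq_append]
      refine Epi.call_in ih (fun x => ?_) (fun x => ?_) (hp _ _ h1) (hp _ _ h2) <;>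
        · rw [doCalls_map, doCalls_map]
          simpa [mapGraph] using (by first | exact hN (J.symm x) | exact hS (J.symm x))
  | @other σ τ c d e f h hc hd he hf h1 h2 ih =>
      rw [mapSeq_append, mapSeq_append]
      exact Epi.other ih (fun hh => hc (J.injective hh)) (fun hh => hd (J.injective hh))
        (fun hh => he (J.injective hh)) (fun hh => hf (J.injective hh)) (hp _ _ h1) (hp _ _ h2)

theorem epi_map (J : Equiv.Perm A) (G : GossipGraph A)
    {perm perm' : List (A × A) → (A × A) → Prop}
    (hp : ∀ ρ c, perm' (mapSeq J ρ) (J c.1, J c.2) ↔ perm ρ c) (a : A)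
    (σ τ : List (A × A)) :
    Epi (mapGraph J G) perm' (J a) (mapSeq J σ) (mapSeq J τ) ↔ Epi G perm a σ τ := by
  constructor
  · intro h
    have hp' : ∀ ρ c, perm' ρ c → perm (mapSeq J.symm ρ) (J.symm c.1, J.symm c.2) := by
      intro ρ c hc
      have := (hp (mapSeq J.symm ρ) (J.symm c.1, J.symm c.2)).mp
      simp only [mapSeq_map_symm, Equiv.apply_symm_apply] at this
      exact this hc
    have h' := epi_map_fwd J.symm (mapGraph J G) hp' (J a) h
    rw [mapGraph_symm_map, mapSeq_symm_map, mapSeq_symm_map, Equiv.symm_apply_apply] at h'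
    exact h'
  · intro h
    exact epi_map_fwd J G (fun ρ c hc => (hp ρ c).mpr hc) a h

mutual
theorem sat_map (J : Equiv.Perm A) (G : GossipGraph A) :
    ∀ (σ : List (A × A)) (φ : Form A),
      Sat (mapGraph J G) (mapSeq J σ) (mapForm J φ) ↔ Sat G σ φ
  | σ, Form.top => Iff.rfl
  | σ, Form.atomN a b => by
      simp only [mapForm, Sat]
      rw [doCalls_map]
      simp [mapGraph]
  | σ, Form.atomS a b => by
      simp only [mapForm, Sat]
      rw [doCalls_map]
      simp [mapGraph]
  | σ, Form.neg φ => by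
      simp only [mapForm, Sat]
      exact not_congr (sat_map J G σ φ)
  | σ, Form.conj φ ψ => by
      simp only [mapForm, Sat]
      exact and_congr (sat_map J G σ φ) (sat_map J G σ ψ)
  | σ, Form.K a P φ => by
      simp only [mapForm, Sat]
      have hp : ∀ (ρ : List (A × A)) (c : A × A),
          ((fun ρ' (c' : A × A) => c'.1 ≠ c'.2 ∧
              (doCalls (mapGraph J G) ρ').N c'.1 c'.2 ∧
              Sat (mapGraph J G) ρ' (mapForm J (P (J.symm c'.1) (J.symm c'.2))))
            (mapSeq J ρ) (J c.1, J c.2)) ↔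
          (c.1 ≠ c.2 ∧ (doCalls G ρ).N c.1 c.2 ∧ Sat G ρ (P c.1 c.2)) := by
        intro ρ c
        simp only [ne_eq, EmbeddingLike.apply_eq_iff_eq]
        rw [doCalls_map]
        simp only [mapGraph, Equiv.symm_apply_apply]
        exact and_congr Iff.rfl (and_congr Iff.rfl (sat_map J G ρ (P c.1 c.2)))
      constructor
      · intro h τ hτ
        exact (sat_map J G τ φ).mp (h (mapSeq J τ) ((epi_map J G hp a τ σ).mpr hτ))
      · intro h τ' hτ'
        rw [← mapSeq_map_symm J τ'] at hτ' ⊢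
        exact (sat_map J G _ φ).mpr (h _ ((epi_map J G hp a _ σ).mp hτ'))
  | σ, Form.box π φ => by
      simp only [mapForm, Sat]
      constructor
      · intro h τ hτ
        exact (sat_map J G τ φ).mp (h (mapSeq J τ) ((progRel_map J G σ τ π).mpr hτ))
      · intro h τ' hτ'
        rw [← mapSeq_map_symm J τ'] at hτ' ⊢
        exact (sat_map J G _ φ).mpr (h _ ((progRel_map J G σ _ π).mp hτ'))

theorem progRel_map (J : Equiv.Perm A) (G : GossipGraph A) :
    ∀ (σ τ : List (A × A)) (π : Prog A),
      ProgRel (mapGraph J G) (mapProg J π) (mapSeq J σ) (mapSeq J τ) ↔ ProgRel G π σ τ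
  | σ, τ, Prog.test φ => by
      simp only [mapProg, ProgRel]
      exact and_congr ⟨fun h => mapSeq_inj J h, fun h => by rw [h]⟩ (sat_map J G σ φ)
  | σ, τ, Prog.call a b => by
      simp only [mapProg, ProgRel, ne_eq, EmbeddingLike.apply_eq_iff_eq]
      rw [doCalls_map]
      simp only [mapGraph, Equiv.symm_apply_apply]
      refine and_congr Iff.rfl (and_congr Iff.rfl ?_)
      rw [show mapSeq J σ ++ [(J a, J b)] = mapSeq J (σ ++ [(a, b)]) from
        (mapSeq_append J σ (a, b)).symm]
      exact ⟨fun h => mapSeq_inj J h, fun h => by rw [h]⟩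
  | σ, τ, Prog.seq π π' => by
      simp only [mapProg, ProgRel]
      constructor
      · rintro ⟨ρ', h1, h2⟩
        refine ⟨mapSeq J.symm ρ', ?_, ?_⟩
        · have := (progRel_map J G σ (mapSeq J.symm ρ') π).mp
          rw [mapSeq_map_symm] at this
          exact this h1
        · have := (progRel_map J G (mapSeq J.symm ρ') τ π').mp
          rw [mapSeq_map_symm] at this
          exact this h2
      · rintro ⟨ρ, h1, h2⟩
        exact ⟨mapSeq J ρ, (progRel_map J G σ ρ π).mpr h1, (progRel_map J G ρ τ π').mpr h2⟩
  | σ, τ, Prog.cup π π' => by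
      simp only [mapProg, ProgRel]
      exact or_congr (progRel_map J G σ τ π) (progRel_map J G σ τ π')
  | σ, τ, Prog.star π => by
      simp only [mapProg, ProgRel]
      constructor
      · intro h
        have h' := Relation.ReflTransGen.lift (mapSeq J.symm)
          (fun x y (hxy : ProgRel (mapGraph J G) (mapProg J π) x y) => by
            have := (progRel_map J G (mapSeq J.symm x) (mapSeq J.symm y) π).mp
            rw [mapSeq_map_symm, mapSeq_map_symm] at this
            exact this hxy) _ _ h
        rwa [Function.onFun, mapSeq_symm_map, mapSeq_symm_map] at h'
      · intro h
        exact Relation.ReflTransGen.lift (mapSeq J)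
          (fun x y hxy => (progRel_map J G x y π).mpr hxy) _ _ h
end

theorem ext_map_fwd {G G' : GossipGraph A} (J : Equiv.Perm A)
    {perm perm' : List (A × A) → (A × A) → Prop}
    (hp : ∀ ρ c, perm' (mapSeq J ρ) (J c.1, J c.2) ↔ perm ρ c)
    {σ : List (A × A)} (h : Ext G perm σ) : Ext G' perm' (mapSeq J σ) := by
  induction h with
  | nil => exact Ext.nil
  | @snoc ρ c hE hperm ih =>
      rw [mapSeq_append]
      exact ih.snoc ((hp ρ c).mpr hperm)

theorem ext_map_bwd {G G' : GossipGraph A} (J : Equiv.Perm A)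
    {perm perm' : List (A × A) → (A × A) → Prop}
    (hp : ∀ ρ c, perm' (mapSeq J ρ) (J c.1, J c.2) ↔ perm ρ c)
    {σ' : List (A × A)} (h : Ext G' perm' σ') :
    ∃ σ, Ext G perm σ ∧ mapSeq J σ = σ' := by
  induction h with
  | nil => exact ⟨[], Ext.nil, rfl⟩
  | @snoc ρ' c' hE hperm ih =>
      obtain ⟨ρ, hρ, rfl⟩ := ih
      refine ⟨ρ ++ [(J.symm c'.1, J.symm c'.2)], hρ.snoc ?_, ?_⟩
      · have := (hp ρ (J.symm c'.1, J.symm c'.2)).mp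
        simp only [Equiv.apply_symm_apply] at this
        exact this hperm
      · rw [mapSeq_append]
        simp

/-- If a syntactic protocol is symmetric, then its extension is symmetric. -/
theorem symmetric_extension {A : Type} [Fintype A] (P : Protocol A)
    (hsym : ∀ (J : Equiv.Perm A) (a b : A), a ≠ b → P (J a) (J b) = mapForm J (P a b))
    (J : Equiv.Perm A) (G : GossipGraph A) (hG : Initial G) :
    extension P (mapGraph J G) = mapSeq J '' extension P G := by
  ext σ'
  have hp : ∀ ρ c, Permits (mapGraph J G) P (mapSeq J ρ) (J c.1, J c.2) ↔ Permits G P ρ c := by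
    intro ρ c
    unfold Permits
    by_cases hne : c.1 = c.2
    · simp [hne]
    · simp only [ne_eq, EmbeddingLike.apply_eq_iff_eq]
      rw [doCalls_map]
      simp only [mapGraph, Equiv.symm_apply_apply]
      refine and_congr Iff.rfl (and_congr Iff.rfl ?_)
      rw [hsym J c.1 c.2 hne]
      exact sat_map J G ρ (P c.1 c.2)
  constructor
  · intro h
    obtain ⟨σ, hσ, rfl⟩ := ext_map_bwd J hp h
    exact ⟨σ, hσ, rfl⟩
  · rintro ⟨σ, hσ, rfl⟩
    exact ext_map_fwd J hp hσ


end Gossip
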